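/- If gcd(w_1,…,w_n) = 1, then the cardinality of M equals (1/d) · ∏_{i=1}^n (d/w_i). -/

import Mathlib

/- Statement 10: if gcd(w_1,…,w_n) = 1 then |M| = (1/d)·∏ (d/w_i). -/

theorem stmt_10 {n : ℕ} (hn : 1 ≤ n)
    (w : Fin n → ℕ) (hw : ∀ i, 0 < w i)
    (d : ℕ) (hd : d = ∑ i, w i) (hdvd : ∀ i, w i ∣ d)
    (hgcd : Finset.univ.gcd w = 1)
    (M : Set (∀ i : Fin n, ZMod (d / w i)))
    (hM : M = {x | d ∣ ∑ i, w i * (x i).val}) :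
    M.Finite ∧ M.ncard * d = ∏ i, (d / w i) := by
  have hd0 : 0 < d := by
    subst hd
    apply Finset.sum_pos (fun i _ => hw i)
    exact Finset.univ_nonempty_iff.mpr (Fin.pos_iff_nonempty.mp hn)
  haveI : NeZero d := ⟨hd0.ne'⟩
  have hq : ∀ i, 0 < d / w i := fun i => Nat.div_pos (Nat.le_of_dvd hd0 (hdvd i)) (hw i)
  haveI hnz : ∀ i, NeZero (d / w i) := fun i => ⟨(hq i).ne'⟩
  haveI hfin : ∀ i, Fintype (ZMod (d / w i)) := fun i => ZMod.fintype _
  have hwq : ∀ i, w i * (d / w i) = d := fun i => Nat.mul_div_cancel' (hdvd i)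
  -- key congruence
  have key : ∀ (i : Fin n) (a b : ZMod (d / w i)),
      ((w i * (a + b).val : ℕ) : ZMod d)
        = ((w i * a.val : ℕ) : ZMod d) + ((w i * b.val : ℕ) : ZMod d) := by
    intro i a b
    rw [← Nat.cast_add, ← Nat.mul_add]
    apply (ZMod.natCast_eq_natCast_iff _ _ _).mpr
    have h2 : w i * (a + b).val ≡ w i * (a.val + b.val) [MOD w i * (d / w i)] :=
      Nat.ModEq.mul_left' (w i) (by rw [ZMod.val_add]; exact (Nat.mod_modEq _ _))
    rwa [hwq i] at h2
  set f : (∀ i : Fin n, ZMod (d / w i)) →+ ZMod d :=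
    { toFun := fun x => ∑ i, ((w i * (x i).val : ℕ) : ZMod d)
      map_zero' := by simp
      map_add' := by
        intro x y
        show (∑ i, ((w i * ((x + y) i).val : ℕ) : ZMod d)) = _
        rw [← Finset.sum_add_distrib]
        exact Finset.sum_congr rfl fun i _ => key i (x i) (y i) } with hf
  have hfx : ∀ x, f x = ((∑ i, w i * (x i).val : ℕ) : ZMod d) := by
    intro x; simp [hf]
  have hMker : M = (f.ker : Set _) := by
    rw [hM]
    ext x
    simp only [Set.mem_setOf_eq, SetLike.mem_coe, AddMonoidHom.mem_ker, hfx,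
      ZMod.natCast_eq_zero_iff]
  -- surjectivity
  have hwi : ∀ i, ((w i : ℕ) : ZMod d) ∈ f.range := by
    intro i
    rcases eq_or_lt_of_le (Nat.one_le_iff_ne_zero.mpr (hq i).ne') with h1 | h1
    · have : w i = d := by rw [← hwq i, ← h1]; exact (mul_one _).symm
      rw [this, ZMod.natCast_self]
      exact zero_mem _
    · refine ⟨Pi.single (M := fun j => ZMod (d / w j)) i 1, ?_⟩
      rw [hfx]
      have hsing : ∀ j, w j * ((Pi.single (M := fun j => ZMod (d / w j)) i 1) j).val
          = if j = i then w i else 0 := by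
        intro j
        by_cases hj : j = i
        · subst hj
          simp [ZMod.val_one_eq_one_mod, Nat.mod_eq_of_lt h1]
        · simp [Pi.single_eq_of_ne hj, hj]
      rw [Finset.sum_congr rfl fun j _ => hsing j,
        Finset.sum_ite_eq' Finset.univ i fun _ => w i]
      simp
  have hone : (1 : ZMod d) ∈ f.range := by
    set H : AddSubgroup ℤ := f.range.comap (Int.castAddHom (ZMod d)) with hH
    obtain ⟨a, ha⟩ := Int.subgroup_cyclic H
    have hmem : ∀ i, (w i : ℤ) ∈ H := by
      intro i
      simp only [hH, AddSubgroup.mem_comap, Int.coe_castAddHom, Int.cast_natCast]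
      exact hwi i
    have hadvd : ∀ i, a.natAbs ∣ w i := by
      intro i
      have h := hmem i
      rw [ha, ← AddSubgroup.zmultiples_eq_closure, Int.mem_zmultiples_iff] at h
      exact Int.ofNat_dvd.mp (Int.natAbs_dvd.mpr h)
    have h1 : a.natAbs ∣ 1 := hgcd ▸ Finset.dvd_gcd fun i _ => hadvd i
    have hone' : (1 : ℤ) ∈ H := by
      rw [ha, ← AddSubgroup.zmultiples_eq_closure, Int.mem_zmultiples_iff]
      exact Int.natAbs_dvd.mp (Int.ofNat_dvd.mpr h1)
    simpa only [hH, AddSubgroup.mem_comap, Int.coe_castAddHom, Int.cast_one] using hone'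
  have htop : f.range = ⊤ := by
    rw [AddSubgroup.eq_top_iff']
    intro z
    have : z = z.val • (1 : ZMod d) := by
      rw [nsmul_eq_mul, mul_one, ZMod.natCast_val, ZMod.cast_id]
    rw [this]
    exact AddSubgroup.nsmul_mem _ hone z.val
  -- cardinalities
  have hcard := AddSubgroup.card_eq_card_quotient_mul_card_addSubgroup f.ker
  have hquot : Nat.card ((∀ i : Fin n, ZMod (d / w i)) ⧸ f.ker) = d := by
    rw [Nat.card_congr (QuotientAddGroup.quotientKerEquivRange f).toEquiv, htop,
      Nat.card_congr AddSubgroup.topEquiv.toEquiv, Nat.card_zmod]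
  have hdom : Nat.card (∀ i : Fin n, ZMod (d / w i)) = ∏ i, (d / w i) := by
    rw [Nat.card_pi]
    exact Finset.prod_congr rfl fun i _ => Nat.card_zmod _
  have hMfin : M.Finite := Set.toFinite M
  refine ⟨hMfin, ?_⟩
  have hncard : M.ncard = Nat.card f.ker := by
    rw [← Nat.card_coe_set_eq, hMker]
    rfl
  rw [hquot, hdom] at hcard
  rw [hncard, mul_comm]
  exact hcard.symm
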